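/- arXiv:1209.1156 — 2 statements merged into one kernel-verified Lean document; each statement's English description precedes it below -/
import Mathlib

section
/- Knight's identity: for every τ ∈ ℝ and all real numbers u and v, ρ_τ(u−v) − ρ_τ(u) = −v·(τ − I(u ≤ 0)) + ∫_0^v (I(u ≤ s) − I(u ≤ 0)) ds, where the integral is the (signed) interval integral over [0, v]. -/
open intervalIntegral MeasureTheory

private lemma step_intble (u a b : ℝ) :
    IntervalIntegrable (fun s => if u ≤ s then (1:ℝ) else 0) volume a b := by
  apply Monotone.intervalIntegrable
  intro x y hxy
  by_cases h : u ≤ x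
  · simp [h, h.trans hxy]
  · by_cases h' : u ≤ y <;> simp [h, h']

private lemma ae_ne (u : ℝ) : ∀ᵐ s : ℝ, s ≠ u := by
  rw [MeasureTheory.ae_iff]
  simp [Real.volume_singleton]

private lemma int_one (u a b : ℝ) (h1 : u ≤ a) (h2 : a ≤ b) :
    ∫ s in a..b, (if u ≤ s then (1:ℝ) else 0) = b - a := by
  rw [intervalIntegral.integral_congr (g := fun _ => (1:ℝ)) ?_]
  · simp
  · intro s hs
    rw [Set.uIcc_of_le h2] at hs
    simp [h1.trans hs.1]

private lemma int_zero (u a b : ℝ) (h1 : a ≤ b) (h2 : b ≤ u) :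
    ∫ s in a..b, (if u ≤ s then (1:ℝ) else 0) = 0 := by
  rw [intervalIntegral.integral_congr_ae (g := fun _ => (0:ℝ)) ?_]
  · simp
  · filter_upwards [ae_ne u] with s hsu hs
    rw [Set.uIoc_of_le h1] at hs
    have : ¬ u ≤ s := fun h => hsu (le_antisymm (hs.2.trans h2) h)
    simp [this]

private lemma int_step (u v : ℝ) :
    ∫ s in (0:ℝ)..v, (if u ≤ s then (1:ℝ) else 0) = max v u - max 0 u := by
  rcases le_total 0 v with hv | hv
  · rcases le_total u 0 with hu | hu
    · rw [int_one u 0 v hu hv, max_eq_left (hu.trans hv), max_eq_left hu]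
    · rcases le_total u v with huv | huv
      · rw [← intervalIntegral.integral_add_adjacent_intervals
          (step_intble u 0 u) (step_intble u u v),
          int_zero u 0 u hu le_rfl, int_one u u v le_rfl huv,
          max_eq_left huv, max_eq_right hu]
        ring
      · rw [int_zero u 0 v hv huv, max_eq_right huv, max_eq_right hu]
        ring
  · rcases le_total u v with hu | hu
    · rw [intervalIntegral.integral_symm, int_one u v 0 hu hv,
        max_eq_left hu, max_eq_left (hu.trans hv)]
      ring
    · rcases le_total u 0 with hu0 | hu0
      · rw [intervalIntegral.integral_symm,
          ← intervalIntegral.integral_add_adjacent_intervals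
            (step_intble u v u) (step_intble u u 0),
          int_zero u v u hu le_rfl, int_one u u 0 le_rfl hu0,
          max_eq_right hu, max_eq_left hu0]
        ring
      · rw [intervalIntegral.integral_symm, int_zero u v 0 hv hu0,
          max_eq_right hu, max_eq_right hu0]
        ring

/-- The check function of Koenker and Bassett: ρ_τ(u) = u(τ − I(u < 0)). -/
noncomputable def checkFun (τ u : ℝ) : ℝ := u * (τ - if u < 0 then 1 else 0)

private lemma check_le (τ x : ℝ) (h : x ≤ 0) : checkFun τ x = x * (τ - 1) := by
  rcases lt_or_eq_of_le h with h' | h'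
  · simp [checkFun, h']
  · simp [checkFun, h']

private lemma check_ge (τ x : ℝ) (h : 0 ≤ x) : checkFun τ x = x * τ := by
  simp [checkFun, not_lt.2 h]

/-- Knight's identity: for every τ ∈ ℝ and all real u, v,
ρ_τ(u−v) − ρ_τ(u) = −v·(τ − I(u ≤ 0)) + ∫_0^v (I(u ≤ s) − I(u ≤ 0)) ds. -/
theorem knight_identity (τ u v : ℝ) :
    checkFun τ (u - v) - checkFun τ u =
      -v * (τ - if u ≤ 0 then 1 else 0) +
        ∫ s in (0:ℝ)..v,
          ((if u ≤ s then (1:ℝ) else 0) - (if u ≤ 0 then (1:ℝ) else 0)) := by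
  have hint : (∫ s in (0:ℝ)..v,
      ((if u ≤ s then (1:ℝ) else 0) - (if u ≤ 0 then (1:ℝ) else 0)))
      = (max v u - max 0 u) - v * (if u ≤ 0 then (1:ℝ) else 0) := by
    rw [intervalIntegral.integral_sub (step_intble u 0 v) intervalIntegrable_const,
      int_step, intervalIntegral.integral_const, smul_eq_mul]
    ring
  rw [hint]
  rcases le_or_gt u 0 with h1 | h1 <;> rcases le_or_gt v u with h2 | h2
  · rw [check_ge τ (u - v) (by linarith), check_le τ u h1, if_pos h1,
      max_eq_right h2, max_eq_left h1]
    ring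
  · rw [check_le τ (u - v) (by linarith), check_le τ u h1, if_pos h1,
      max_eq_left h2.le, max_eq_left h1]
    ring
  · rw [check_ge τ (u - v) (by linarith), check_ge τ u h1.le, if_neg (not_le.2 h1),
      max_eq_right h2, max_eq_right h1.le]
    ring
  · rw [check_le τ (u - v) (by linarith), check_ge τ u h1.le, if_neg (not_le.2 h1),
      max_eq_left h2.le, max_eq_right h1.le]
    ring
end

section
/- Argmin convergence for convex functions: let f_n : ℝ^d → ℝ be convex functions converging pointwise to a convex function f : ℝ^d → ℝ that has a unique global minimizer x₀. If for each n, x_n is a global minimizer of f_n, then x_n → x₀. -/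
open Filter

/-- The `d+1` vertices of a simplex containing the sup-norm ball of radius `r` around `x₀`. -/
def simplexPt (d : ℕ) (x₀ : Fin d → ℝ) (r : ℝ) : Option (Fin d) → (Fin d → ℝ)
  | none => fun k => x₀ k - r
  | some i => fun k => x₀ k - r + (if k = i then 2 * r * d else 0)

lemma simplex_weights_repr (d : ℕ) (hd : 0 < d) (x₀ y : Fin d → ℝ) (r : ℝ) (hr : 0 < r)
    (hy : dist y x₀ ≤ r) :
    ∃ w : Option (Fin d) → ℝ, (∀ j, 0 ≤ w j) ∧ (∑ j, w j) = 1 ∧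
      (∑ j, w j • simplexPt d x₀ r j) = y := by
  have hc : (2 * r * d : ℝ) ≠ 0 := by
    have : (0:ℝ) < d := by exact_mod_cast hd
    positivity
  have hc' : (0:ℝ) < 2 * r * d := by
    have : (0:ℝ) < d := by exact_mod_cast hd
    positivity
  have hcoord : ∀ i, |y i - x₀ i| ≤ r := by
    intro i
    have := (dist_pi_le_iff hr.le).1 hy i
    rwa [Real.dist_eq] at this
  set ws : Fin d → ℝ := fun i => (y i - x₀ i + r) / (2 * r * d) with hws
  have hws0 : ∀ i, 0 ≤ ws i := by
    intro i
    have := (abs_le.1 (hcoord i)).1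
    apply div_nonneg (by linarith) hc'.le
  have hwsum : (∑ i, ws i) ≤ 1 := by
    have hle : ∀ i ∈ Finset.univ, ws i ≤ (2 * r) / (2 * r * d) := by
      intro i _
      have := (abs_le.1 (hcoord i)).2
      exact div_le_div_of_nonneg_right (by linarith) hc'.le
    calc (∑ i, ws i) ≤ ∑ _i : Fin d, (2 * r) / (2 * r * d) := Finset.sum_le_sum hle
      _ = d * ((2 * r) / (2 * r * d)) := by
          rw [Finset.sum_const, Finset.card_univ, Fintype.card_fin, nsmul_eq_mul]
      _ = 1 := by field_simp
  refine ⟨fun j => Option.elim j (1 - ∑ i, ws i) ws, ?_, ?_, ?_⟩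
  · rintro (_ | i)
    · simpa using by linarith [hwsum]
    · exact hws0 i
  · rw [Fintype.sum_option]
    simp
  · funext k
    rw [Fintype.sum_option]
    simp only [Option.elim, Pi.add_apply, Finset.sum_apply, Pi.smul_apply, simplexPt,
      smul_eq_mul]
    have hsum : ∑ i, ws i * (x₀ k - r + (if k = i then 2 * r * d else 0))
        = (∑ i, ws i) * (x₀ k - r) + (y k - x₀ k + r) := by
      rw [Finset.sum_congr rfl (fun i _ => mul_add (ws i) _ _), Finset.sum_add_distrib,
        ← Finset.sum_mul]
      congr 1
      have : ∀ i ∈ Finset.univ, ws i * (if k = i then 2 * r * d else 0)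
          = if k = i then ws i * (2 * r * d) else 0 := by
        intro i _; split <;> simp
      rw [Finset.sum_congr rfl this, Finset.sum_ite_eq]
      simp only [Finset.mem_univ, if_true, hws]
      field_simp
    rw [hsum]
    ring

lemma convex_upper_on_ball (d : ℕ) (hd : 0 < d) (f : (Fin d → ℝ) → ℝ)
    (hf : ConvexOn ℝ Set.univ f) (x₀ : Fin d → ℝ) (r : ℝ) (hr : 0 < r) (M : ℝ)
    (hM : ∀ j, f (simplexPt d x₀ r j) ≤ M)
    (y : Fin d → ℝ) (hy : dist y x₀ ≤ r) : f y ≤ M := by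
  obtain ⟨w, hw0, hw1, hwy⟩ := simplex_weights_repr d hd x₀ y r hr hy
  have h := hf.map_sum_le (t := Finset.univ) (w := w) (p := fun j => simplexPt d x₀ r j)
    (fun j _ => hw0 j) hw1 (fun j _ => Set.mem_univ _)
  rw [hwy] at h
  simp only [smul_eq_mul] at h
  calc f y ≤ ∑ j, w j * f (simplexPt d x₀ r j) := h
    _ ≤ ∑ j, w j * M := Finset.sum_le_sum fun j _ =>
        mul_le_mul_of_nonneg_left (hM j) (hw0 j)
    _ = M := by rw [← Finset.sum_mul, hw1, one_mul]

/-- Argmin convergence for convex functions: if convex f_n : ℝ^d → ℝ converge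
pointwise to a convex f with a unique global minimizer x₀, and x_n minimizes f_n,
then x_n → x₀. -/
theorem convex_argmin_convergence (d : ℕ)
    (f : ℕ → (Fin d → ℝ) → ℝ) (g : (Fin d → ℝ) → ℝ)
    (hconv : ∀ n, ConvexOn ℝ Set.univ (f n))
    (hgconv : ConvexOn ℝ Set.univ g)
    (hlim : ∀ x, Tendsto (fun n => f n x) atTop (nhds (g x)))
    (x₀ : Fin d → ℝ) (hmin : ∀ x, g x₀ ≤ g x)
    (huniq : ∀ x, x ≠ x₀ → g x₀ < g x)
    (x : ℕ → (Fin d → ℝ)) (hxn : ∀ n, ∀ y, f n (x n) ≤ f n y) :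
    Tendsto x atTop (nhds x₀) := by
  rcases Nat.eq_zero_or_pos d with hd | hd
  · subst hd
    have hx : x = fun _ => x₀ := funext fun n => funext fun i => i.elim0
    rw [hx]
    exact tendsto_const_nhds
  -- g is continuous
  have hg : Continuous g := by
    rw [← continuousOn_univ]
    exact hgconv.continuousOn isOpen_univ
  rw [Metric.tendsto_nhds]
  intro ε hε
  set S := Metric.sphere x₀ ε with hSdef
  have hSne : S.Nonempty := by
    refine ⟨x₀ + Pi.single ⟨0, hd⟩ ε, ?_⟩
    simp [hSdef, dist_eq_norm, Pi.norm_single, Real.norm_eq_abs, abs_of_pos hε]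
  have hScpt : IsCompact S := isCompact_sphere x₀ ε
  obtain ⟨z, hzS, hz⟩ := hScpt.exists_isMinOn hSne hg.continuousOn
  set m := g z with hmdef
  have hzne : z ≠ x₀ := by
    intro h
    have : dist z x₀ = ε := hzS
    rw [h, dist_self] at this
    linarith
  have hm : g x₀ < m := huniq z hzne
  set δ := (m - g x₀) / 3 with hδdef
  have hδ : 0 < δ := by rw [hδdef]; linarith
  -- upper bound M on the ball of radius 4ε
  have hr4 : (0:ℝ) < 4 * ε := by linarith
  set p := simplexPt d x₀ (4 * ε) with hpdef
  have hOptNe : (Finset.univ : Finset (Option (Fin d))).Nonempty :=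
    ⟨none, Finset.mem_univ _⟩
  set M₀ := Finset.univ.sup' hOptNe (fun j => g (p j)) + 1 with hM₀def
  set M := max M₀ m with hMdef
  have hMm : m ≤ M := le_max_right _ _
  have hEvUB : ∀ᶠ n in atTop, ∀ w, dist w x₀ ≤ 4 * ε → f n w ≤ M := by
    have h1 : ∀ᶠ n in atTop, ∀ j : Option (Fin d), f n (p j) ≤ g (p j) + 1 :=
      eventually_all.2 fun j => (hlim (p j)).eventually_le_const (lt_add_one _)
    filter_upwards [h1] with n hn w hw
    refine convex_upper_on_ball d hd (f n) (hconv n) x₀ (4 * ε) hr4 M ?_ w hw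
    intro j
    calc f n (p j) ≤ g (p j) + 1 := hn j
      _ ≤ M₀ := by
          rw [hM₀def]
          gcongr
          exact Finset.le_sup' (fun j => g (p j)) (Finset.mem_univ j)
      _ ≤ M := le_max_left _ _
  -- parameters for the net argument
  set t := δ / (2 * (M - m + δ)) with htdef
  have hden : 0 < 2 * (M - m + δ) := by nlinarith
  have ht0 : 0 < t := div_pos hδ hden
  have ht1 : t < 1 := by
    rw [htdef, div_lt_one hden]
    nlinarith
  have htM : t * (2 * (M - m + δ)) = δ := div_mul_cancel₀ _ hden.ne'
  set η := 3 * ε * t with hηdef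
  have hη : 0 < η := by positivity
  obtain ⟨F, hFS, hFcov⟩ := hScpt.elim_nhds_subcover (fun c => Metric.ball c η)
    (fun c _ => Metric.ball_mem_nhds c hη)
  have h2 : ∀ᶠ n in atTop, ∀ c ∈ F, m - δ / 2 ≤ f n c := by
    rw [eventually_all_finset]
    intro c hc
    have hcS : c ∈ S := hFS c hc
    have hgc : m - δ / 2 < g c := by
      have := hz hcS
      simp only [Set.mem_setOf_eq] at this
      linarith [this]
    exact (hlim c).eventually_const_le hgc
  have h3 : ∀ᶠ n in atTop, f n x₀ ≤ g x₀ + δ :=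
    (hlim x₀).eventually_le_const (by linarith)
  filter_upwards [hEvUB, h2, h3] with n hUB h2n h3n
  -- conclude for this n
  by_contra hcon
  push_neg at hcon
  set D := dist (x n) x₀ with hDdef
  have hD0 : 0 < D := lt_of_lt_of_le hε hcon
  set s := ε / D with hsdef
  have hs0 : 0 < s := div_pos hε hD0
  have hs1 : s ≤ 1 := by rw [hsdef, div_le_one hD0]; exact hcon
  set y := x₀ + s • (x n - x₀) with hydef
  have hyS : y ∈ S := by
    show dist y x₀ = ε
    rw [hydef, dist_eq_norm, add_sub_cancel_left, norm_smul, Real.norm_eq_abs,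
      abs_of_pos hs0, hsdef, ← dist_eq_norm, ← hDdef]
    field_simp
  -- f n y ≤ f n x₀
  have hcomb : y = (1 - s) • x₀ + s • (x n) := by
    rw [hydef, smul_sub, sub_smul, one_smul]
    abel
  have h5 : f n y ≤ (1 - s) * f n x₀ + s * f n (x n) := by
    rw [hcomb]
    exact (hconv n).2 (Set.mem_univ _) (Set.mem_univ _) (by linarith) hs0.le (by ring)
  have h6 : f n y ≤ f n x₀ := by nlinarith [hxn n x₀]
  -- lower bound on the sphere
  have hlow : m - δ ≤ f n y := by
    have := hFcov hyS
    simp only [Set.mem_iUnion, Metric.mem_ball] at this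
    obtain ⟨c, hcF, hyc⟩ := this
    set w := y + (1 / t) • (c - y) with hwdef
    have key : ∀ Y W : Fin d → ℝ, W = Y + (1 / t) • (c - Y) →
        c = (1 - t) • Y + t • W := by
      intro Y W hW
      have ht : t * (1 / t) = 1 := by field_simp
      rw [hW, smul_add, smul_smul, ht, one_smul, sub_smul, one_smul]
      abel
    have hcw : c = (1 - t) • y + t • w := key y w hwdef
    have hdwy : dist w y = (1 / t) * dist c y := by
      rw [hwdef, dist_eq_norm, add_sub_cancel_left, norm_smul, Real.norm_eq_abs,
        abs_of_pos (by positivity : (0:ℝ) < 1 / t), dist_eq_norm]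
    have hdistw : dist w x₀ ≤ 4 * ε := by
      have h1 : dist w x₀ ≤ dist w y + dist y x₀ := dist_triangle w y x₀
      have h2' : dist y x₀ = ε := hyS
      have h3' : dist w y < 3 * ε := by
        rw [hdwy]
        have : dist c y < η := by rwa [dist_comm]
        calc (1 / t) * dist c y < (1 / t) * η := by
              apply mul_lt_mul_of_pos_left this (by positivity)
          _ = 3 * ε := by rw [hηdef]; field_simp
      linarith
    have hfw : f n w ≤ M := hUB w hdistw
    have hfc : m - δ / 2 ≤ f n c := h2n c hcF
    have hconvineq : f n c ≤ (1 - t) * f n y + t * f n w := by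
      rw [hcw]
      exact (hconv n).2 (Set.mem_univ _) (Set.mem_univ _) (by linarith) ht0.le (by ring)
    have h7 : t * f n w ≤ t * M := mul_le_mul_of_nonneg_left hfw ht0.le
    have h8 : (1 - t) * (m - δ) ≤ (1 - t) * f n y := by nlinarith
    exact le_of_mul_le_mul_left h8 (by linarith)
  -- contradiction
  have : m = g x₀ + 3 * δ := by rw [hδdef]; ring
  linarith
end
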